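/- Let 1 < p < n' (conjugate exponent of n ≥ 2), w a decreasing positive sequence, and α a nonnegative decreasing sequence. For the diagonal operator D'_σ : ℓ^{n'} → d(w,p) adjoint to D_σ with σ = α^{1/n}: ‖D'_σ‖ = ( ∑ₖ α(k)^{p'/(p'−n)} w(k)^{n'/(n'−p)} )^{(p'−n)/(p'n)}, i.e., the supremum over ‖x‖_{ℓ^{n'}} ≤ 1 of ‖(α(k)^{1/n}x(k))ₖ‖_{d(w,p)} equals ‖α‖_{d(w^{n'/(n'−p)}, p'/(p'−n))}^{1/n}. -/

import Mathlib

open Finset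

/-- The decreasing rearrangement (0-indexed). -/
noncomputable def dRear (x : ℕ → ℂ) (k : ℕ) : ℝ :=
  sInf {s : ℝ | ∃ J : Finset ℕ, J.card ≤ k ∧ ∀ j ∉ J, ‖x j‖ ≤ s}

/-- The Lorentz norm `‖x‖_{d(w,p)} = (∑ₖ x*(k)^p w(k))^{1/p}`. -/
noncomputable def lorentzNrm (w : ℕ → ℝ) (p : ℝ) (x : ℕ → ℂ) : ℝ :=
  (∑' k, dRear x k ^ p * w k) ^ (1 / p)

lemma dRear_set_nonneg (x : ℕ → ℂ) (k : ℕ) {s : ℝ}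
    (hs : s ∈ {s : ℝ | ∃ J : Finset ℕ, J.card ≤ k ∧ ∀ j ∉ J, ‖x j‖ ≤ s}) : 0 ≤ s := by
  obtain ⟨J, _, hJ⟩ := hs
  obtain ⟨j, hj⟩ := Infinite.exists_notMem_finset J
  exact le_trans (norm_nonneg _) (hJ j hj)

lemma dRear_nonneg (x : ℕ → ℂ) (k : ℕ) : 0 ≤ dRear x k :=
  Real.sInf_nonneg fun _ hs => dRear_set_nonneg x k hs

lemma dRear_le {x : ℕ → ℂ} {k : ℕ} {s : ℝ} (J : Finset ℕ) (hJ : J.card ≤ k)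
    (h : ∀ j ∉ J, ‖x j‖ ≤ s) : dRear x k ≤ s :=
  csInf_le ⟨0, fun _ ht => dRear_set_nonneg x k ht⟩ ⟨J, hJ, h⟩

/-- dRear of a sequence with antitone norms is the norm itself. -/
lemma dRear_of_antitone {x : ℕ → ℂ} {r : ℕ → ℝ} (hr : Antitone r) (hx : ∀ k, ‖x k‖ = r k)
    (k : ℕ) : dRear x k = r k := by
  apply le_antisymm
  · refine dRear_le (range k) (by simp) (fun j hj => ?_)
    rw [hx]
    exact hr (by simpa using hj)
  · have hne : {s : ℝ | ∃ J : Finset ℕ, J.card ≤ k ∧ ∀ j ∉ J, ‖x j‖ ≤ s}.Nonempty :=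
      ⟨r k, ⟨range k, by simp, fun j hj => by rw [hx]; exact hr (by simpa using hj)⟩⟩
    apply le_csInf hne
    rintro s ⟨J, hJ, h⟩
    have hex : ∃ j ∈ range (k + 1), j ∉ J := by
      by_contra h'
      push_neg at h'
      have hsub := Finset.card_le_card h'
      rw [card_range] at hsub
      omega
    obtain ⟨j, hj1, hj2⟩ := hex
    calc r k ≤ r j := hr (by simpa [Nat.lt_succ_iff] using hj1)
    _ = ‖x j‖ := (hx j).symm
    _ ≤ s := h j hj2

/-- Sum of an antitone function over a finset of card m is at most the sum over `range m`. -/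
lemma sum_antitone_le {a : ℕ → ℝ} (ha : Antitone a) :
    ∀ (m : ℕ) (F : Finset ℕ), F.card = m → ∑ i ∈ F, a i ≤ ∑ k ∈ range m, a k := by
  intro m
  induction m with
  | zero => intro F hF; simp [Finset.card_eq_zero.mp hF]
  | succ m ih =>
    intro F hF
    have hne : F.Nonempty := by rw [← Finset.card_pos, hF]; omega
    set M := F.max' hne with hM
    have hMmem : M ∈ F := F.max'_mem hne
    have hMm : m ≤ M := by
      by_contra h
      push_neg at h
      have hsub : F ⊆ range (M + 1) := fun x hx => mem_range.mpr (Nat.lt_succ_of_le (F.le_max' x hx))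
      have := Finset.card_le_card hsub
      rw [hF, card_range] at this
      omega
    have herase : (F.erase M).card = m := by rw [Finset.card_erase_of_mem hMmem, hF]; omega
    calc ∑ i ∈ F, a i = a M + ∑ i ∈ F.erase M, a i := (Finset.add_sum_erase F a hMmem).symm
    _ ≤ a m + ∑ k ∈ range m, a k := add_le_add (ha hMm) (ih _ herase)
    _ = ∑ k ∈ range (m + 1), a k := by rw [Finset.sum_range_succ]; ring

/-- Rearrangement-type inequality: an injection can only decrease the pairing of two
antitone sequences. -/
lemma rearr_le {a : ℕ → ℝ} (ha : Antitone a) :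
    ∀ (N : ℕ) (v : ℕ → ℝ), Antitone v → 0 ≤ v N → ∀ j : ℕ → ℕ, Set.InjOn j (Set.Iio N) →
      ∑ k ∈ range N, a (j k) * v k ≤ ∑ k ∈ range N, a k * v k := by
  intro N
  induction N with
  | zero => simp
  | succ N ih =>
    intro v hv hv0 j hj
    set v' : ℕ → ℝ := fun k => v k - v N with hv'
    have hv'a : Antitone v' := fun i j hij => by simp only [hv']; linarith [hv hij]
    have hv'N : 0 ≤ v' N := by simp [hv']
    have hvN1 : 0 ≤ v N := le_trans hv0 (hv (Nat.le_succ N))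
    have hinj' : Set.InjOn j (Set.Iio N) := hj.mono (fun x hx => lt_trans hx (Nat.lt_succ_self N))
    have hK : ∑ k ∈ range (N + 1), a (j k) ≤ ∑ k ∈ range (N + 1), a k := by
      have hcard : ((range (N + 1)).image j).card = N + 1 := by
        rw [Finset.card_image_of_injOn (by simpa [Finset.coe_range] using hj), card_range]
      have hsum : ∑ k ∈ range (N + 1), a (j k) = ∑ i ∈ (range (N + 1)).image j, a i := by
        rw [Finset.sum_image]
        intro x hx y hy hxy
        exact hj (by simpa using Finset.mem_range.mp hx) (by simpa using Finset.mem_range.mp hy) hxy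
      rw [hsum]
      exact sum_antitone_le ha (N + 1) _ hcard
    have hIH : ∑ k ∈ range (N + 1), a (j k) * v' k ≤ ∑ k ∈ range (N + 1), a k * v' k := by
      rw [Finset.sum_range_succ, Finset.sum_range_succ]
      have hz : v' N = 0 := by simp [hv']
      rw [hz, mul_zero, mul_zero, add_zero, add_zero]
      exact ih v' hv'a hv'N j hinj'
    have expand : ∀ b : ℕ → ℝ, ∑ k ∈ range (N + 1), b k * v k
        = ∑ k ∈ range (N + 1), b k * v' k + v N * ∑ k ∈ range (N + 1), b k := by
      intro b
      rw [Finset.mul_sum, ← Finset.sum_add_distrib]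
      refine Finset.sum_congr rfl fun k _ => ?_
      simp only [hv']
      ring
    rw [expand (fun k => a (j k)), expand a]
    exact add_le_add hIH (mul_le_mul_of_nonneg_left hK hvN1)

/-- Greedy selection of witnesses for the decreasing rearrangement. -/
lemma exists_selection (y : ℕ → ℂ) {τ : ℝ} (hτ : 1 < τ) (N : ℕ) :
    ∃ j : ℕ → ℕ, Set.InjOn j (Set.Iio N) ∧ ∀ k < N, dRear y k ≤ τ * ‖y (j k)‖ := by
  have hτ0 : 0 < τ := lt_trans one_pos hτ
  induction N with
  | zero => exact ⟨id, by simp [Set.InjOn], by omega⟩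
  | succ N ih =>
    obtain ⟨j, hjinj, hjle⟩ := ih
    set J : Finset ℕ := (range N).image j with hJ
    have hJcard : J.card ≤ N := le_trans Finset.card_image_le (by simp)
    have hfresh : ∃ m, m ∉ J ∧ dRear y N ≤ τ * ‖y m‖ := by
      by_cases hd : dRear y N ≤ 0
      · obtain ⟨m, hm⟩ := Infinite.exists_notMem_finset J
        exact ⟨m, hm, le_trans hd (by positivity)⟩
      · push_neg at hd
        by_contra hcon
        push_neg at hcon
        have hle : dRear y N ≤ dRear y N / τ := by
          refine dRear_le J hJcard fun m hm => ?_
          have h1 : τ * ‖y m‖ < dRear y N := hcon m hm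
          rw [le_div_iff₀ hτ0]
          nlinarith [norm_nonneg (y m)]
        have : dRear y N / τ < dRear y N := by
          rw [div_lt_iff₀ hτ0]
          nlinarith
        linarith
    obtain ⟨m, hmJ, hm⟩ := hfresh
    refine ⟨Function.update j N m, ?_, ?_⟩
    · intro a ha b hb hab
      simp only [Set.mem_Iio, Nat.lt_succ_iff] at ha hb
      rcases eq_or_lt_of_le ha with ha' | ha' <;> rcases eq_or_lt_of_le hb with hb' | hb'
      · omega
      · exfalso
        rw [ha', Function.update_self, Function.update_of_ne (by omega)] at hab
        exact hmJ (hab ▸ Finset.mem_image_of_mem j (mem_range.mpr hb'))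
      · exfalso
        rw [hb', Function.update_self, Function.update_of_ne (by omega)] at hab
        exact hmJ (hab ▸ Finset.mem_image_of_mem j (mem_range.mpr ha'))
      · rw [Function.update_of_ne (by omega), Function.update_of_ne (by omega)] at hab
        exact hjinj ha' hb' hab
    · intro k hk
      rcases Nat.lt_succ_iff_lt_or_eq.mp hk with hk' | hk'
      · rw [Function.update_of_ne (by omega)]
        exact hjle k hk'
      · rw [hk', Function.update_self]
        exact hm

lemma antitone_rpow {a : ℕ → ℝ} (ha : Antitone a) (h0 : ∀ k, 0 ≤ a k) {c : ℝ} (hc : 0 ≤ c) :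
    Antitone fun k => a k ^ c := fun _ _ h => Real.rpow_le_rpow (h0 _) (ha h) hc

theorem stmt18 (w : ℕ → ℝ) (hw : ∀ k, 0 < w k) (hwa : Antitone w)
    (p : ℝ) (hp : 1 < p) (n : ℕ) (hn : 2 ≤ n)
    (n' p' : ℝ) (hn' : n' = (n : ℝ) / ((n : ℝ) - 1)) (hp' : p' = p / (p - 1))
    (hpn : p < n')
    (α : ℕ → ℝ) (hαa : Antitone α) (hα0 : ∀ k, 0 ≤ α k)
    (hαsum : Summable fun k => α k ^ (p' / (p' - n)) * w k ^ (n' / (n' - p))) :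
    sSup {t : ℝ | ∃ x : ℕ → ℂ, (Summable fun k => ‖x k‖ ^ n') ∧
        (∑' k, ‖x k‖ ^ n') ^ (1 / n') ≤ 1 ∧
        t = lorentzNrm w p (fun k => Complex.ofReal (α k ^ (1 / (n : ℝ))) * x k)}
      = (∑' k, α k ^ (p' / (p' - n)) * w k ^ (n' / (n' - p))) ^ ((p' - n) / (p' * n)) := by
  -- basic positivity
  have hn1 : (1 : ℝ) < n := by exact_mod_cast Nat.lt_of_lt_of_le one_lt_two hn
  have hnm1 : (0 : ℝ) < (n : ℝ) - 1 := by linarith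
  have hn0 : (0 : ℝ) < n := by linarith
  have hp0 : (0 : ℝ) < p := lt_trans one_pos hp
  have hp1 : (0 : ℝ) < p - 1 := by linarith
  have hn'0 : (0 : ℝ) < n' := by rw [hn']; positivity
  have hpn1 : p * ((n : ℝ) - 1) < n := by
    have := hpn
    rw [hn', lt_div_iff₀ hnm1] at this
    exact this
  have hD : (0 : ℝ) < (n : ℝ) - p * ((n : ℝ) - 1) := by linarith
  set D : ℝ := (n : ℝ) - p * ((n : ℝ) - 1) with hDdef
  have hn'p : (0 : ℝ) < n' - p := by linarith
  have hp'0 : (0 : ℝ) < p' := by rw [hp']; positivity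
  have hsubn : n' - p = D / ((n : ℝ) - 1) := by rw [hn', hDdef]; field_simp
  have hsubp : p' - n = D / (p - 1) := by rw [hp', hDdef]; field_simp; ring
  have hp'n : (0 : ℝ) < p' - n := by rw [hsubp]; positivity
  have hAeq : p' / (p' - n) = p / D := by
    rw [hsubp, hp']
    field_simp
  have hBeq : n' / (n' - p) = n / D := by
    rw [hsubn, hn']
    field_simp
  set A : ℝ := p' / (p' - n) with hAdef
  set B : ℝ := n' / (n' - p) with hBdef
  have hA : (0 : ℝ) < A := by rw [hAeq]; positivity
  have hB : (0 : ℝ) < B := by rw [hBeq]; positivity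
  set G : ℝ := p / ((n' - p) * n) with hGdef
  set H : ℝ := 1 / (n' - p) with hHdef
  have hG : (0 : ℝ) < G := by rw [hGdef]; positivity
  have hH : (0 : ℝ) < H := by rw [hHdef]; positivity
  have I3 : p / (n : ℝ) * B = A := by
    rw [hAeq, hBeq]; field_simp
  have I4 : G * n' = A := by
    rw [hGdef, hAeq, hsubn, hn']
    field_simp
  have I5 : H * n' = B := by rw [hHdef, hBdef]; ring
  have I6 : 1 / (n : ℝ) + G = A / p := by
    rw [hGdef, hAeq, hsubn]
    field_simp
    ring
  have I7 : H * p + 1 = B := by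
    rw [hHdef, hBeq, hsubn]
    field_simp
    ring
  have IL : (p' - n) / (p' * n) * p = (n' - p) / n' := by
    rw [hsubp, hsubn, hp', hn']
    field_simp
  have I8 : (1 - p / n') * (1 / p) = (p' - n) / (p' * n) := by
    have h1 : (p' - n) / (p' * n) = (n' - p) / n' * (1 / p) := by
      rw [← IL]; field_simp
    rw [h1]
    congr 1
    field_simp
  -- abbreviations
  set S : ℝ := ∑' k, α k ^ A * w k ^ B with hSdef
  have hterm_nn : ∀ k, 0 ≤ α k ^ A * w k ^ B := fun k =>
    mul_nonneg (Real.rpow_nonneg (hα0 k) _) (Real.rpow_nonneg (hw k).le _)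
  have hS0 : 0 ≤ S := tsum_nonneg hterm_nn
  have hdz : ∀ k, dRear (fun _ => (0 : ℂ)) k = 0 := fun k =>
    dRear_of_antitone (r := fun _ => 0) (fun _ _ _ => le_rfl) (fun _ => by simp) k
  have hlz : lorentzNrm w p (fun _ => (0 : ℂ)) = 0 := by
    unfold lorentzNrm
    have : (fun k => dRear (fun _ => (0 : ℂ)) k ^ p * w k) = fun _ => (0 : ℝ) := by
      funext k
      rw [hdz k, Real.zero_rpow hp0.ne', zero_mul]
    rw [this, tsum_zero, Real.zero_rpow (one_div_ne_zero hp0.ne')]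
  rcases eq_or_lt_of_le (hα0 0) with hα00 | hα0pos
  · -- degenerate case: α ≡ 0
    have hαz : ∀ k, α k = 0 := fun k =>
      le_antisymm (le_trans (hαa (Nat.zero_le k)) hα00.symm.le) (hα0 k)
    have hSz : S = 0 := by
      rw [hSdef]
      have : (fun k => α k ^ A * w k ^ B) = fun _ => (0 : ℝ) := by
        funext k; rw [hαz k, Real.zero_rpow hA.ne', zero_mul]
      rw [this, tsum_zero]
    have hRz : S ^ ((p' - (n : ℝ)) / (p' * n)) = 0 := by
      rw [hSz, Real.zero_rpow (ne_of_gt (by positivity))]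
    rw [hRz]
    apply IsGreatest.csSup_eq
    have hfz : (fun k : ℕ => ‖(fun _ : ℕ => (0 : ℂ)) k‖ ^ n') = fun _ : ℕ => (0 : ℝ) := by
      funext k; simp [Real.zero_rpow hn'0.ne']
    constructor
    · refine ⟨fun _ => 0, ?_, ?_, ?_⟩
      · rw [hfz]; exact summable_zero
      · rw [hfz, tsum_zero, Real.zero_rpow (one_div_ne_zero hn'0.ne')]; norm_num
      · have hfun : (fun k : ℕ => Complex.ofReal (α k ^ (1 / (n : ℝ))) * (fun _ : ℕ => (0 : ℂ)) k)
            = fun _ : ℕ => (0 : ℂ) := by funext k; simp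
        rw [hfun]; exact hlz.symm
    · rintro t ⟨x, hxs, hxle, rfl⟩
      have hfun : (fun k : ℕ => Complex.ofReal (α k ^ (1 / (n : ℝ))) * x k)
          = fun _ : ℕ => (0 : ℂ) := by
        funext k
        rw [hαz k, Real.zero_rpow (one_div_ne_zero hn0.ne'), Complex.ofReal_zero, zero_mul]
      rw [hfun, hlz]
  · -- main case: α 0 > 0
    have hSpos : 0 < S := by
      refine lt_of_lt_of_le (show (0:ℝ) < α 0 ^ A * w 0 ^ B by
        have := hw 0; positivity) (Summable.le_tsum hαsum 0 fun j _ => hterm_nn j)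
    set RHS : ℝ := S ^ ((p' - (n : ℝ)) / (p' * n)) with hRHSdef
    have hRHS0 : 0 < RHS := Real.rpow_pos_of_pos hSpos _
    set L : ℝ := S ^ ((n' - p) / n') with hLdef
    have hL0 : 0 < L := Real.rpow_pos_of_pos hSpos _
    have hLR : RHS ^ p = L := by
      rw [hRHSdef, hLdef, ← Real.rpow_mul hS0, IL]
    -- the key partial-sum bound
    have key : ∀ x : ℕ → ℂ, (Summable fun k => ‖x k‖ ^ n') → (∑' k, ‖x k‖ ^ n') ≤ 1 →
        ∀ N : ℕ, ∑ k ∈ range N,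
          dRear (fun k => Complex.ofReal (α k ^ (1 / (n : ℝ))) * x k) k ^ p * w k ≤ L := by
      intro x hxs hx1 N
      set y : ℕ → ℂ := fun k => Complex.ofReal (α k ^ (1 / (n : ℝ))) * x k with hydef
      have hynorm : ∀ k, ‖y k‖ = α k ^ (1 / (n : ℝ)) * ‖x k‖ := by
        intro k
        rw [hydef]
        simp only [norm_mul, Complex.norm_real]
        rw [Real.norm_of_nonneg (Real.rpow_nonneg (hα0 k) _)]
      have hτstep : ∀ τ : ℝ, 1 < τ →
          ∑ k ∈ range N, dRear y k ^ p * w k ≤ τ ^ p * L := by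
        intro τ hτ
        obtain ⟨j, hjinj, hjsel⟩ := exists_selection y hτ N
        have hτ0 : (0 : ℝ) < τ := lt_trans one_pos hτ
        set f : ℕ → ℝ := fun k => ‖x (j k)‖ ^ p with hfdef
        set g : ℕ → ℝ := fun k => α (j k) ^ (p / (n : ℝ)) * w k with hgdef
        have hf0 : ∀ k, 0 ≤ f k := fun k => Real.rpow_nonneg (norm_nonneg _) _
        have hg0 : ∀ k, 0 ≤ g k := fun k => mul_nonneg (Real.rpow_nonneg (hα0 _) _) (hw k).le
        have hstep1 : ∀ k ∈ range N, dRear y k ^ p * w k ≤ τ ^ p * (f k * g k) := by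
          intro k hk
          have h1 : dRear y k ^ p ≤ (τ * ‖y (j k)‖) ^ p :=
            Real.rpow_le_rpow (dRear_nonneg _ _) (hjsel k (mem_range.mp hk)) hp0.le
          have h2 : (τ * ‖y (j k)‖) ^ p
              = τ ^ p * (α (j k) ^ (p / (n : ℝ)) * ‖x (j k)‖ ^ p) := by
            rw [hynorm, Real.mul_rpow hτ0.le (mul_nonneg (Real.rpow_nonneg (hα0 _) _) (norm_nonneg _)),
              Real.mul_rpow (Real.rpow_nonneg (hα0 _) _) (norm_nonneg _),
              ← Real.rpow_mul (hα0 _), show (1 / (n : ℝ)) * p = p / (n : ℝ) by ring]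
          calc dRear y k ^ p * w k ≤ (τ * ‖y (j k)‖) ^ p * w k :=
                mul_le_mul_of_nonneg_right h1 (hw k).le
          _ = τ ^ p * (f k * g k) := by rw [h2, hfdef, hgdef]; ring
        have hsum1 : ∑ k ∈ range N, dRear y k ^ p * w k ≤ τ ^ p * ∑ k ∈ range N, f k * g k := by
          rw [Finset.mul_sum]
          exact Finset.sum_le_sum hstep1
        have hconj : Real.HolderConjugate (n' / p) (n' / (n' - p)) := by
          refine Real.holderConjugate_iff.mpr ⟨(one_lt_div hp0).mpr hpn, ?_⟩
          rw [inv_div, inv_div, ← add_div, show p + (n' - p) = n' by ring,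
            div_self hn'0.ne']
        have hHold := Real.inner_le_Lp_mul_Lq_of_nonneg (range N) hconj
          (fun i _ => hf0 i) (fun i _ => hg0 i)
        have hfac1 : (∑ k ∈ range N, f k ^ (n' / p)) ^ (1 / (n' / p)) ≤ 1 := by
          refine Real.rpow_le_one
            (Finset.sum_nonneg fun i _ => Real.rpow_nonneg (hf0 i) _) ?_ (by positivity)
          have he : ∀ k, f k ^ (n' / p) = ‖x (j k)‖ ^ n' := by
            intro k
            rw [hfdef, ← Real.rpow_mul (norm_nonneg _)]
            congr 1
            field_simp
          calc ∑ k ∈ range N, f k ^ (n' / p) = ∑ k ∈ range N, ‖x (j k)‖ ^ n' :=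
                Finset.sum_congr rfl fun k _ => he k
          _ = ∑ i ∈ (range N).image j, ‖x i‖ ^ n' := by
              rw [Finset.sum_image]
              intro a ha b hb hab
              exact hjinj (mem_range.mp ha) (mem_range.mp hb) hab
          _ ≤ ∑' i, ‖x i‖ ^ n' :=
              Summable.sum_le_tsum _ (fun i _ => Real.rpow_nonneg (norm_nonneg _) _) hxs
          _ ≤ 1 := hx1
        have hg2nn : (0:ℝ) ≤ ∑ k ∈ range N, g k ^ (n' / (n' - p)) :=
          Finset.sum_nonneg fun i _ => Real.rpow_nonneg (hg0 i) _
        have hfac2 : (∑ k ∈ range N, g k ^ (n' / (n' - p))) ^ (1 / (n' / (n' - p)))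
            ≤ S ^ ((n' - p) / n') := by
          rw [one_div_div]
          refine Real.rpow_le_rpow hg2nn ?_ (by positivity)
          have he : ∀ k, g k ^ (n' / (n' - p)) = α (j k) ^ A * w k ^ B := by
            intro k
            rw [hgdef, Real.mul_rpow (Real.rpow_nonneg (hα0 _) _) (hw k).le,
              ← Real.rpow_mul (hα0 _), ← hBdef, I3]
          calc ∑ k ∈ range N, g k ^ (n' / (n' - p)) = ∑ k ∈ range N, α (j k) ^ A * w k ^ B :=
                Finset.sum_congr rfl fun k _ => he k
          _ ≤ ∑ k ∈ range N, α k ^ A * w k ^ B :=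
              rearr_le (antitone_rpow hαa hα0 hA.le) N (fun k => w k ^ B)
                (antitone_rpow hwa (fun k => (hw k).le) hB.le)
                (Real.rpow_nonneg (hw N).le _) j hjinj
          _ ≤ S := Summable.sum_le_tsum _ (fun i _ => hterm_nn i) hαsum
        have hLbound : ∑ k ∈ range N, f k * g k ≤ L := by
          calc ∑ k ∈ range N, f k * g k
              ≤ (∑ k ∈ range N, f k ^ (n' / p)) ^ (1 / (n' / p))
                * (∑ k ∈ range N, g k ^ (n' / (n' - p))) ^ (1 / (n' / (n' - p))) := hHold
          _ ≤ 1 * S ^ ((n' - p) / n') :=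
              mul_le_mul hfac1 hfac2 (Real.rpow_nonneg hg2nn _) zero_le_one
          _ = L := by rw [one_mul, hLdef]
        calc ∑ k ∈ range N, dRear y k ^ p * w k ≤ τ ^ p * ∑ k ∈ range N, f k * g k := hsum1
        _ ≤ τ ^ p * L := mul_le_mul_of_nonneg_left hLbound (Real.rpow_nonneg hτ0.le _)
      refine le_of_forall_pos_le_add fun ε hε => ?_
      have hq : (1 : ℝ) < (L + ε) / L := (lt_div_iff₀ hL0).mpr (by linarith)
      set τ : ℝ := ((L + ε) / L) ^ (1 / p) with hτdef
      have hτ1 : 1 < τ :=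
        (Real.one_lt_rpow_iff_of_pos (by positivity)).mpr (Or.inl ⟨hq, by positivity⟩)
      have hτp : τ ^ p = (L + ε) / L := by
        rw [hτdef, ← Real.rpow_mul (by positivity), one_div,
          inv_mul_cancel₀ hp0.ne', Real.rpow_one]
      calc ∑ k ∈ range N, dRear y k ^ p * w k ≤ τ ^ p * L := hτstep τ hτ1
      _ = L + ε := by rw [hτp, div_mul_cancel₀ _ hL0.ne']
    apply IsGreatest.csSup_eq
    constructor
    · -- membership: the optimal vector
      have hS1n' : (0 : ℝ) < S ^ (1 / n') := Real.rpow_pos_of_pos hSpos _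
      set c : ℕ → ℝ := fun k => α k ^ G * w k ^ H / S ^ (1 / n') with hcdef
      have hc0 : ∀ k, 0 ≤ c k := fun k => div_nonneg
        (mul_nonneg (Real.rpow_nonneg (hα0 k) _) (Real.rpow_nonneg (hw k).le _)) hS1n'.le
      have hnormc : ∀ k, ‖Complex.ofReal (c k)‖ = c k := fun k => by
        rw [Complex.norm_real, Real.norm_of_nonneg (hc0 k)]
      have hxn' : ∀ k : ℕ, ‖Complex.ofReal (c k)‖ ^ n' = α k ^ A * w k ^ B / S := by
        intro k
        rw [hnormc k, hcdef,
          Real.div_rpow (mul_nonneg (Real.rpow_nonneg (hα0 k) _) (Real.rpow_nonneg (hw k).le _))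
            (Real.rpow_nonneg hS0 _),
          Real.mul_rpow (Real.rpow_nonneg (hα0 k) _) (Real.rpow_nonneg (hw k).le _),
          ← Real.rpow_mul (hα0 k), ← Real.rpow_mul (hw k).le, ← Real.rpow_mul hS0,
          I4, I5, show (1 / n') * n' = 1 by field_simp, Real.rpow_one]
      have hfeq : (fun k : ℕ => ‖Complex.ofReal (c k)‖ ^ n')
          = fun k => α k ^ A * w k ^ B / S := funext hxn'
      refine ⟨fun k => Complex.ofReal (c k), ?_, ?_, ?_⟩
      · show Summable fun k : ℕ => ‖Complex.ofReal (c k)‖ ^ n'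
        rw [hfeq]
        exact hαsum.div_const S
      · show (∑' k : ℕ, ‖Complex.ofReal (c k)‖ ^ n') ^ (1 / n') ≤ 1
        rw [hfeq, tsum_div_const, ← hSdef, div_self hSpos.ne', Real.one_rpow]
      · show RHS = lorentzNrm w p fun k =>
          Complex.ofReal (α k ^ (1 / (n : ℝ))) * Complex.ofReal (c k)
        set r : ℕ → ℝ := fun k => α k ^ (A / p) * w k ^ H / S ^ (1 / n') with hrdef
        have hyr : ∀ k, ‖Complex.ofReal (α k ^ (1 / (n : ℝ))) * Complex.ofReal (c k)‖ = r k := by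
          intro k
          rw [norm_mul, Complex.norm_real, Real.norm_of_nonneg (Real.rpow_nonneg (hα0 k) _),
            hnormc k, hcdef, hrdef]
          have hne : 1 / (n : ℝ) + G ≠ 0 := by positivity
          have haa : α k ^ (1 / (n : ℝ)) * α k ^ G = α k ^ (A / p) := by
            rw [← I6]
            exact (Real.rpow_add' (hα0 k) hne).symm
          calc α k ^ (1 / (n : ℝ)) * (α k ^ G * w k ^ H / S ^ (1 / n'))
              = α k ^ (1 / (n : ℝ)) * α k ^ G * w k ^ H / S ^ (1 / n') := by ring
          _ = α k ^ (A / p) * w k ^ H / S ^ (1 / n') := by rw [haa]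
        have hra : Antitone r := by
          intro i j hij
          have h1 : α j ^ (A / p) ≤ α i ^ (A / p) :=
            Real.rpow_le_rpow (hα0 j) (hαa hij) (by positivity)
          have h2 : w j ^ H ≤ w i ^ H := Real.rpow_le_rpow (hw j).le (hwa hij) hH.le
          simp only [hrdef]
          exact (div_le_div_iff_of_pos_right hS1n').mpr
            (mul_le_mul h1 h2 (Real.rpow_nonneg (hw j).le _) (Real.rpow_nonneg (hα0 i) _))
        have hdr : ∀ k, dRear (fun k : ℕ =>
            Complex.ofReal (α k ^ (1 / (n : ℝ))) * Complex.ofReal (c k)) k = r k :=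
          dRear_of_antitone hra hyr
        have hval : lorentzNrm w p (fun k : ℕ =>
            Complex.ofReal (α k ^ (1 / (n : ℝ))) * Complex.ofReal (c k)) = RHS := by
          unfold lorentzNrm
          have htermeq : (fun k : ℕ => dRear (fun k : ℕ =>
              Complex.ofReal (α k ^ (1 / (n : ℝ))) * Complex.ofReal (c k)) k ^ p * w k)
              = fun k => α k ^ A * w k ^ B / S ^ (p * (1 / n')) := by
            funext k
            rw [hdr k, hrdef,
              Real.div_rpow (mul_nonneg (Real.rpow_nonneg (hα0 k) _)
                (Real.rpow_nonneg (hw k).le _)) (Real.rpow_nonneg hS0 _),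
              Real.mul_rpow (Real.rpow_nonneg (hα0 k) _) (Real.rpow_nonneg (hw k).le _),
              ← Real.rpow_mul (hα0 k), ← Real.rpow_mul (hw k).le, ← Real.rpow_mul hS0,
              show A / p * p = A by field_simp, show (1 / n') * p = p * (1 / n') by ring,
              div_mul_eq_mul_div, mul_assoc, ← Real.rpow_add_one (hw k).ne', I7]
          rw [htermeq, tsum_div_const, ← hSdef]
          have hsub : S / S ^ (p * (1 / n')) = S ^ (1 - p * (1 / n')) := by
            rw [Real.rpow_sub hSpos, Real.rpow_one]
          rw [hsub, ← Real.rpow_mul hS0,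
            show (1 - p * (1 / n')) * (1 / p) = (p' - (n : ℝ)) / (p' * n) by rw [← I8]; ring,
            hRHSdef]
        exact hval.symm
    · -- upper bound
      rintro t ⟨x, hxs, hxle, rfl⟩
      have htsum0 : 0 ≤ ∑' k, ‖x k‖ ^ n' := tsum_nonneg fun k => by positivity
      have hsum1 : (∑' k, ‖x k‖ ^ n') ≤ 1 := by
        have h1 : ((∑' k, ‖x k‖ ^ n') ^ (1 / n')) ^ n' ≤ 1 :=
          Real.rpow_le_one (Real.rpow_nonneg htsum0 _) hxle hn'0.le
        rw [← Real.rpow_mul htsum0, one_div, inv_mul_cancel₀ hn'0.ne', Real.rpow_one] at h1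
        exact h1
      have hterm0 : ∀ k, 0 ≤ dRear (fun k => Complex.ofReal (α k ^ (1 / (n : ℝ))) * x k) k ^ p
          * w k := fun k => mul_nonneg (Real.rpow_nonneg (dRear_nonneg _ _) _) (hw k).le
      have hts : (∑' k, dRear (fun k => Complex.ofReal (α k ^ (1 / (n : ℝ))) * x k) k ^ p * w k)
          ≤ L := by
        refine tsum_le_of_sum_le' hL0.le fun s => ?_
        refine le_trans (Finset.sum_le_sum_of_subset_of_nonneg
          (fun i hi => mem_range.mpr (Nat.lt_succ_of_le (Finset.le_sup (f := id) hi)))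
          (fun i _ _ => hterm0 i)) (key x hxs hsum1 (s.sup id + 1))
      unfold lorentzNrm
      calc (∑' k, dRear (fun k => Complex.ofReal (α k ^ (1 / (n : ℝ))) * x k) k ^ p * w k) ^ (1/p)
          ≤ L ^ (1/p) := Real.rpow_le_rpow (tsum_nonneg hterm0) hts (by positivity)
      _ = RHS := by
          rw [← hLR, ← Real.rpow_mul hRHS0.le, mul_one_div_cancel hp0.ne', Real.rpow_one]
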